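/- Let A_1, A_2, …, A_m be N×N row-stochastic matrices with nonnegative entries such that every diagonal entry of every A_i is at least η, where 0 < η < 1. Let B_m = A_1 A_2 ⋯ A_m and C_m = A_1 + ⋯ + A_m. Then for every nonempty proper subset S of {1,…,N}, ∑_{i∈S, j∉S} (B_m)_{ij} ≥ η^{m−1} ∑_{i∈S, j∉S} (C_m)_{ij}. -/

import Mathlib

open Finset

lemma prodNonneg {N : ℕ} (L : List (Matrix (Fin N) (Fin N) ℝ))
    (h : ∀ M ∈ L, ∀ i j, 0 ≤ M i j) : ∀ i j, 0 ≤ L.prod i j := by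
  induction L with
  | nil =>
    intro i j
    simp only [List.prod_nil, Matrix.one_apply]
    split <;> norm_num
  | cons A L ih =>
    intro i j
    rw [List.prod_cons, Matrix.mul_apply]
    exact Finset.sum_nonneg fun k _ => mul_nonneg (h A (by simp) i k)
      (ih (fun M hM => h M (by simp [hM])) k j)

lemma prodDiag {N : ℕ} (η : ℝ) (hη : 0 ≤ η) (L : List (Matrix (Fin N) (Fin N) ℝ))
    (h0 : ∀ M ∈ L, ∀ i j, 0 ≤ M i j) (hd : ∀ M ∈ L, ∀ i, η ≤ M i i) :
    ∀ i, η ^ L.length ≤ L.prod i i := by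
  induction L with
  | nil => intro i; simp [Matrix.one_apply]
  | cons A L ih =>
    intro i
    have h0' : ∀ M ∈ L, ∀ i j, 0 ≤ M i j := fun M hM => h0 M (by simp [hM])
    have hd' : ∀ M ∈ L, ∀ i, η ≤ M i i := fun M hM => hd M (by simp [hM])
    rw [List.prod_cons, Matrix.mul_apply, List.length_cons, pow_succ']
    calc η * η ^ L.length ≤ A i i * L.prod i i :=
          mul_le_mul (hd A (by simp) i) (ih h0' hd' i) (pow_nonneg hη _)
            (le_trans hη (hd A (by simp) i))
      _ ≤ ∑ k, A i k * L.prod k i :=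
          Finset.single_le_sum
            (fun k _ => mul_nonneg (h0 A (by simp) i k) (prodNonneg L h0' k i))
            (Finset.mem_univ i)

lemma keyStep {N : ℕ} (S : Finset (Fin N)) (a b : ℝ) (ha : 0 ≤ a) (hb : 0 ≤ b)
    (A B : Matrix (Fin N) (Fin N) ℝ)
    (hA0 : ∀ i j, 0 ≤ A i j) (hB0 : ∀ i j, 0 ≤ B i j)
    (hAd : ∀ i, a ≤ A i i) (hBd : ∀ i, b ≤ B i i) :
    a * (∑ i ∈ S, ∑ j ∈ Sᶜ, B i j) + b * (∑ i ∈ S, ∑ j ∈ Sᶜ, A i j)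
      ≤ ∑ i ∈ S, ∑ j ∈ Sᶜ, (A * B) i j := by
  have hRHS : ∑ i ∈ S, ∑ j ∈ Sᶜ, (A * B) i j
      = ∑ k, (∑ i ∈ S, A i k) * (∑ j ∈ Sᶜ, B k j) := by
    simp_rw [Matrix.mul_apply, Finset.sum_mul, Finset.mul_sum]
    rw [Finset.sum_congr rfl fun i _ => (Finset.sum_comm :
      ∑ j ∈ Sᶜ, ∑ k, A i k * B k j = ∑ k, ∑ j ∈ Sᶜ, A i k * B k j),
      Finset.sum_comm]
  rw [hRHS, ← Finset.sum_add_sum_compl S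
    (fun k => (∑ i ∈ S, A i k) * (∑ j ∈ Sᶜ, B k j))]
  apply add_le_add
  · rw [Finset.mul_sum]
    apply Finset.sum_le_sum
    intro k hk
    apply mul_le_mul_of_nonneg_right _ (Finset.sum_nonneg fun j _ => hB0 k j)
    exact le_trans (hAd k)
      (Finset.single_le_sum (fun i _ => hA0 i k) hk)
  · have : ∑ i ∈ S, ∑ j ∈ Sᶜ, A i j = ∑ k ∈ Sᶜ, ∑ i ∈ S, A i k :=
      Finset.sum_comm
    rw [this, Finset.mul_sum]
    apply Finset.sum_le_sum
    intro k hk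
    rw [mul_comm]
    apply mul_le_mul_of_nonneg_left _ (Finset.sum_nonneg fun i _ => hA0 i k)
    exact le_trans (hBd k)
      (Finset.single_le_sum (fun j _ => hB0 k j) hk)

lemma mainList {N : ℕ} (η : ℝ) (hη : 0 ≤ η) (S : Finset (Fin N))
    (L : List (Matrix (Fin N) (Fin N) ℝ))
    (h0 : ∀ M ∈ L, ∀ i j, 0 ≤ M i j) (hd : ∀ M ∈ L, ∀ i, η ≤ M i i) :
    η ^ (L.length - 1) * (L.map (fun M => ∑ i ∈ S, ∑ j ∈ Sᶜ, M i j)).sum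
      ≤ ∑ i ∈ S, ∑ j ∈ Sᶜ, L.prod i j := by
  induction L with
  | nil =>
    simp only [List.length_nil, List.map_nil, List.sum_nil, mul_zero, List.prod_nil]
    exact Finset.sum_nonneg fun i _ => Finset.sum_nonneg fun j _ =>
      prodNonneg [] (by simp) i j
  | cons A L ih =>
    have h0' : ∀ M ∈ L, ∀ i j, 0 ≤ M i j := fun M hM => h0 M (by simp [hM])
    have hd' : ∀ M ∈ L, ∀ i, η ≤ M i i := fun M hM => hd M (by simp [hM])
    cases L with
    | nil => simp
    | cons A' L' =>
      set L2 := A' :: L' with hL2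
      have hlen : 1 ≤ L2.length := by simp [hL2]
      have hkey := keyStep S η (η ^ L2.length) hη (pow_nonneg hη _)
        A L2.prod (h0 A (by simp)) (prodNonneg L2 h0')
        (hd A (by simp)) (prodDiag η hη L2 h0' hd')
      have hih := ih h0' hd'
      rw [List.prod_cons]
      refine le_trans ?_ hkey
      have h1 : η * (η ^ (L2.length - 1)
          * (L2.map (fun M => ∑ i ∈ S, ∑ j ∈ Sᶜ, M i j)).sum)
          ≤ η * (∑ i ∈ S, ∑ j ∈ Sᶜ, L2.prod i j) :=
        mul_le_mul_of_nonneg_left hih hη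
    -- goal LHS: η^(len(A::L2)-1) * (map sum) ≤ η * F(L2.prod) + η^len * F(A)
      have hlen2 : (A :: L2).length - 1 = L2.length := by simp
      rw [hlen2, List.map_cons, List.sum_cons, mul_add]
      have hpow : η * η ^ (L2.length - 1) = η ^ L2.length := by
        have h' : L2.length - 1 + 1 = L2.length := by omega
        rw [← pow_succ', h']
      calc η ^ L2.length * (∑ i ∈ S, ∑ j ∈ Sᶜ, A i j)
            + η ^ L2.length * (L2.map (fun M => ∑ i ∈ S, ∑ j ∈ Sᶜ, M i j)).sum
          = η * (η ^ (L2.length - 1)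
              * (L2.map (fun M => ∑ i ∈ S, ∑ j ∈ Sᶜ, M i j)).sum)
            + η ^ L2.length * (∑ i ∈ S, ∑ j ∈ Sᶜ, A i j) := by
            rw [← mul_assoc, hpow]; ring
        _ ≤ η * (∑ i ∈ S, ∑ j ∈ Sᶜ, L2.prod i j)
            + η ^ L2.length * (∑ i ∈ S, ∑ j ∈ Sᶜ, A i j) := by
            exact add_le_add h1 le_rfl

theorem stmt6 (N m : ℕ) (hN : 2 ≤ N) (hm : 1 ≤ m)
    (η : ℝ) (hη0 : 0 < η) (hη1 : η < 1)
    (A : Fin m → Matrix (Fin N) (Fin N) ℝ)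
    (hnonneg : ∀ k i j, 0 ≤ A k i j)
    (hrow : ∀ k i, ∑ j, A k i j = 1)
    (hdiag : ∀ k i, η ≤ A k i i)
    (S : Finset (Fin N)) (hS : S.Nonempty) (hS' : S ≠ Finset.univ) :
    η ^ (m - 1) * ∑ i ∈ S, ∑ j ∈ Sᶜ, (∑ k, A k) i j ≤
      ∑ i ∈ S, ∑ j ∈ Sᶜ, (List.ofFn A).prod i j := by
  have h0 : ∀ M ∈ List.ofFn A, ∀ i j, 0 ≤ M i j := by
    intro M hM i j
    obtain ⟨k, rfl⟩ := List.mem_ofFn.mp hM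
    exact hnonneg k i j
  have hd : ∀ M ∈ List.ofFn A, ∀ i, η ≤ M i i := by
    intro M hM i
    obtain ⟨k, rfl⟩ := List.mem_ofFn.mp hM
    exact hdiag k i
  have hmain := mainList η hη0.le S (List.ofFn A) h0 hd
  have hsum : ∑ i ∈ S, ∑ j ∈ Sᶜ, (∑ k, A k) i j
      = ((List.ofFn A).map (fun M => ∑ i ∈ S, ∑ j ∈ Sᶜ, M i j)).sum := by
    rw [List.map_ofFn, List.sum_ofFn]
    simp_rw [Matrix.sum_apply]
    rw [Finset.sum_congr rfl fun i (_ : i ∈ S) => (Finset.sum_comm :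
      ∑ j ∈ Sᶜ, ∑ k, A k i j = ∑ k, ∑ j ∈ Sᶜ, A k i j),
      Finset.sum_comm]
    simp [Function.comp]
  rw [hsum]
  simpa using hmain
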